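/- The set of all ratios o(H)/o(G), where G ranges over all finite abelian groups and H ranges over all subgroups of G, is dense in the interval [0, 1]. That is, for every real number a with 0 ≤ a ≤ 1 and every ε > 0, there exist a finite abelian group G and a subgroup H of G such that |o(H)/o(G) - a| < ε. -/

import Mathlib

open Filter Topology

/-- The average order of the elements of a finite group `G`:
`o(G) = (1/|G|) * ∑_{x ∈ G} |x|`. -/
noncomputable def avgOrder (G : Type*) [Group G] : ℝ :=
  (∑ᶠ x : G, (orderOf x : ℝ)) / (Nat.card G)

lemma avgOrder_congr {G H : Type*} [Group G] [Group H] (e : G ≃* H) :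
    avgOrder G = avgOrder H := by
  unfold avgOrder
  rw [Nat.card_congr e.toEquiv]
  have : (∑ᶠ x : G, (orderOf x : ℝ)) = ∑ᶠ y : H, (orderOf y : ℝ) := by
    refine finsum_eq_of_bijective e e.bijective fun x => ?_
    exact_mod_cast (congrArg Nat.cast (orderOf_injective e.toMonoidHom e.injective x)).symm
  rw [this]

lemma avgOrder_eq_of_orderOf_eq (G : Type*) [Group G] [Finite G] (p : ℕ)
    (h : ∀ x : G, x ≠ 1 → orderOf x = p) :
    avgOrder G = (((Nat.card G : ℝ) - 1) * p + 1) / Nat.card G := by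
  classical
  cases nonempty_fintype G
  unfold avgOrder
  rw [finsum_eq_sum_of_fintype, Nat.card_eq_fintype_card]
  congr 1
  have key : ∀ x : G, (orderOf x : ℝ) = p + (if x = 1 then 1 - (p : ℝ) else 0) := by
    intro x
    by_cases hx : x = 1
    · simp [hx]
    · simp [hx, h x hx]
  rw [Finset.sum_congr rfl fun x _ => key x, Finset.sum_add_distrib,
    Finset.sum_const, Finset.sum_ite_eq' Finset.univ (1 : G) fun _ => (1 : ℝ) - p]
  simp [Finset.card_univ]
  ring

lemma avgOrder_prod {A B : Type*} [Group A] [Group B] [Finite A] [Finite B]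
    (h : Nat.Coprime (Nat.card A) (Nat.card B)) :
    avgOrder (A × B) = avgOrder A * avgOrder B := by
  cases nonempty_fintype A
  cases nonempty_fintype B
  unfold avgOrder
  rw [finsum_eq_sum_of_fintype, finsum_eq_sum_of_fintype, finsum_eq_sum_of_fintype,
    Nat.card_eq_fintype_card, Nat.card_eq_fintype_card, Nat.card_eq_fintype_card,
    Fintype.card_prod]
  have key : ∀ x : A × B, (orderOf x : ℝ) = (orderOf x.1 : ℝ) * (orderOf x.2 : ℝ) := by
    intro x
    rw [Prod.orderOf, Nat.Coprime.lcm_eq_mul, Nat.cast_mul]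
    exact Nat.Coprime.coprime_dvd_left (orderOf_dvd_natCard x.1)
      (Nat.Coprime.coprime_dvd_right (orderOf_dvd_natCard x.2) h)
  have hsum : (∑ x : A × B, (orderOf x : ℝ))
      = (∑ x : A, (orderOf x : ℝ)) * ∑ y : B, (orderOf y : ℝ) := by
    rw [Fintype.sum_prod_type, Finset.sum_mul_sum]
    exact Finset.sum_congr rfl fun x _ => Finset.sum_congr rfl fun y _ => key (x, y)
  rw [hsum, Nat.cast_mul, div_mul_div_comm]

abbrev Mp (p : ℕ) := Multiplicative (ZMod p)

lemma natCard_Mp (p : ℕ) : Nat.card (Mp p) = p := by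
  rw [Nat.card_congr Multiplicative.toAdd, Nat.card_zmod]

lemma orderOf_Mp {p : ℕ} (hp : p.Prime) (x : Mp p) (hx : x ≠ 1) : orderOf x = p := by
  have h1 : orderOf x ∣ p := by
    have := orderOf_dvd_natCard x
    rwa [natCard_Mp] at this
  rcases hp.eq_one_or_self_of_dvd _ h1 with h | h
  · exact absurd (orderOf_eq_one_iff.mp h) hx
  · exact h

lemma orderOf_Mp2 {p : ℕ} (hp : p.Prime) (x : Mp p × Mp p) (hx : x ≠ 1) : orderOf x = p := by
  have hpow : x ^ p = 1 := by
    have h1 : x.1 ^ p = 1 := by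
      have := orderOf_dvd_natCard x.1
      rw [natCard_Mp] at this
      exact orderOf_dvd_iff_pow_eq_one.mp this
    have h2 : x.2 ^ p = 1 := by
      have := orderOf_dvd_natCard x.2
      rw [natCard_Mp] at this
      exact orderOf_dvd_iff_pow_eq_one.mp this
    exact Prod.ext_iff.mpr ⟨by simpa using h1, by simpa using h2⟩
  have h1 : orderOf x ∣ p := orderOf_dvd_of_pow_eq_one hpow
  rcases hp.eq_one_or_self_of_dvd _ h1 with h | h
  · exact absurd (orderOf_eq_one_iff.mp h) hx
  · exact h

lemma avgOrder_Mp {p : ℕ} (hp : p.Prime) :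
    avgOrder (Mp p) = (((p : ℝ) - 1) * p + 1) / p := by
  haveI : NeZero p := ⟨hp.pos.ne'⟩
  rw [avgOrder_eq_of_orderOf_eq (Mp p) p (fun x hx => orderOf_Mp hp x hx), natCard_Mp]

lemma natCard_Mp2 (p : ℕ) : Nat.card (Mp p × Mp p) = p ^ 2 := by
  rw [Nat.card_prod, natCard_Mp, sq]

lemma avgOrder_Mp2 {p : ℕ} (hp : p.Prime) :
    avgOrder (Mp p × Mp p) = (((p : ℝ) ^ 2 - 1) * p + 1) / p ^ 2 := by
  haveI : NeZero p := ⟨hp.pos.ne'⟩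
  rw [avgOrder_eq_of_orderOf_eq (Mp p × Mp p) p (fun x hx => orderOf_Mp2 hp x hx), natCard_Mp2]
  push_cast
  ring_nf

lemma inl_inj (p : ℕ) : Function.Injective (MonoidHom.inl (Mp p) (Mp p)) :=
  fun a b hab => by simpa using congrArg Prod.fst hab

noncomputable def einl (p : ℕ) : Mp p ≃* (MonoidHom.inl (Mp p) (Mp p)).range :=
  MonoidHom.ofInjective (inl_inj p)

lemma avgOrder_punit : avgOrder PUnit.{1} = 1 := by
  rw [avgOrder_eq_of_orderOf_eq PUnit.{1} 1 (fun x hx => absurd (Subsingleton.elim x 1) hx)]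
  simp

lemma exists_group : ∀ S : Finset ℕ, (∀ p ∈ S, Nat.Prime p) →
    ∃ (G : Type) (_ : CommGroup G), Finite G ∧
      ∃ H : Subgroup G,
        Nat.card G = ∏ p ∈ S, p ^ 2 ∧
        avgOrder ↥H = ∏ p ∈ S, (((p : ℝ) - 1) * p + 1) / p ∧
        avgOrder G = ∏ p ∈ S, (((p : ℝ) ^ 2 - 1) * p + 1) / p ^ 2 := by
  classical
  intro S
  induction S using Finset.induction_on with
  | empty =>
      intro _
      refine ⟨PUnit, inferInstance, inferInstance, ⊤, by simp, ?_, by simpa using avgOrder_punit⟩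
      rw [avgOrder_congr Subgroup.topEquiv]
      simpa using avgOrder_punit
  | @insert p S hpS ih =>
      intro hS
      have hp : p.Prime := hS p (Finset.mem_insert_self p S)
      have hS' : ∀ q ∈ S, Nat.Prime q := fun q hq => hS q (Finset.mem_insert_of_mem hq)
      obtain ⟨G, iG, fG, H, hcard, havgH, havgG⟩ := ih hS'
      haveI : NeZero p := ⟨hp.pos.ne'⟩
      set Kp : Subgroup (Mp p × Mp p) := (MonoidHom.inl (Mp p) (Mp p)).range with hKp
      have hcardKp : Nat.card ↥Kp = p := by
        rw [← Nat.card_congr (einl p).toEquiv, natCard_Mp]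
      have hcopS : Nat.Coprime p (∏ q ∈ S, q ^ 2) :=
        Nat.Coprime.prod_right fun q hq =>
          ((Nat.coprime_primes hp (hS' q hq)).mpr (by rintro rfl; exact hpS hq)).pow_right 2
      refine ⟨(Mp p × Mp p) × G, inferInstance, inferInstance, Kp.prod H, ?_, ?_, ?_⟩
      · rw [Nat.card_prod, natCard_Mp2, hcard, Finset.prod_insert hpS]
      · rw [avgOrder_congr (Subgroup.prodEquiv Kp H),
          avgOrder_prod (by
            rw [hcardKp]
            exact Nat.Coprime.coprime_dvd_right
              (hcard ▸ Subgroup.card_subgroup_dvd_card H) hcopS),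
          ← avgOrder_congr (einl p), avgOrder_Mp hp, havgH, Finset.prod_insert hpS]
      · rw [avgOrder_prod (by
            rw [natCard_Mp2, hcard]
            exact hcopS.pow_left 2),
          avgOrder_Mp2 hp, havgG, Finset.prod_insert hpS]

noncomputable def rP (p : ℕ) : ℝ :=
  ((((p : ℝ)) - 1) * p + 1) / p / ((((p : ℝ) ^ 2 - 1) * p + 1) / p ^ 2)

lemma rP_bounds {p : ℕ} (hp : 2 ≤ p) :
    0 < rP p ∧ rP p < 1 ∧ 1 - 1/(p:ℝ) ≤ rP p ∧ 1/(4*(p:ℝ)) ≤ 1 - rP p := by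
  have hx : (2:ℝ) ≤ (p:ℝ) := by exact_mod_cast hp
  set x : ℝ := (p:ℝ) with hxdef
  have hx0 : 0 < x := by linarith
  have hA : 0 < (x - 1) * x + 1 := by nlinarith
  have hB : 0 < (x ^ 2 - 1) * x + 1 := by nlinarith
  have hrP : rP p = ((x - 1) * x + 1) * x / ((x ^ 2 - 1) * x + 1) := by
    unfold rP
    rw [← hxdef]
    field_simp
  refine ⟨?_, ?_, ?_, ?_⟩
  · rw [hrP]; exact div_pos (mul_pos hA hx0) hB
  · rw [hrP, div_lt_one hB]; nlinarith
  · have h1 : (1:ℝ) - 1/x = (x - 1)/x := by field_simp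
    rw [hrP, h1, div_le_div_iff₀ hx0 hB]
    nlinarith
  · have h2 : (1:ℝ) - ((x - 1) * x + 1) * x / ((x ^ 2 - 1) * x + 1)
        = ((x-1)^2) / ((x ^ 2 - 1) * x + 1) := by
      rw [one_sub_div hB.ne']
      ring
    rw [hrP, h2, div_le_div_iff₀ (by positivity) hB]
    nlinarith [mul_nonneg (sub_nonneg.2 hx) (by nlinarith [sq_nonneg x] : (0:ℝ) ≤ 3*x^2 - 2*x + 1)]


lemma not_summable_rP :
    ¬ Summable (fun j : ℕ => 1 - rP (Nat.nth Nat.Prime j)) := by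
  intro hsum
  set q : ℕ → ℕ := Nat.nth Nat.Prime with hqdef
  have hq : ∀ j, (q j).Prime := fun j => Nat.nth_mem_of_infinite Nat.infinite_setOf_prime j
  have hq2 : ∀ j, 2 ≤ q j := fun j => (hq j).two_le
  have h4 : Summable (fun j : ℕ => 1/(4*((q j : ℕ):ℝ))) :=
    hsum.of_nonneg_of_le (fun j => by positivity) (fun j => (rP_bounds (hq2 j)).2.2.2)
  have h1q : Summable (fun j : ℕ => 1/(((q j : ℕ)):ℝ)) := by
    have := h4.mul_left 4
    refine this.congr fun j => ?_
    have : ((q j : ℕ):ℝ) ≠ 0 := by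
      have := hq2 j; positivity
    field_simp
  have hinj : Function.Injective (fun j => q j) := Nat.nth_injective Nat.infinite_setOf_prime
  have hsurj : ∀ p : Nat.Primes, ∃ j, q j = (p : ℕ) := by
    intro p
    have : (p : ℕ) ∈ Set.range q := by
      rw [hqdef, Nat.range_nth_of_infinite Nat.infinite_setOf_prime]
      exact p.2
    exact this
  let e : ℕ ≃ Nat.Primes := Equiv.ofBijective (fun j => ⟨q j, hq j⟩)
    ⟨fun a b hab => hinj (congrArg Subtype.val hab), fun p => by
      obtain ⟨j, hj⟩ := hsurj p; exact ⟨j, Subtype.ext hj⟩⟩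
  exact Nat.Primes.not_summable_one_div (e.summable_iff.mp h1q)

lemma exists_finset_prod (a ε : ℝ) (ha0 : 0 < a) (ha1 : a ≤ 1) (hε : 0 < ε) :
    ∃ S : Finset ℕ, (∀ p ∈ S, Nat.Prime p) ∧ |(∏ p ∈ S, rP p) - a| < ε := by
  classical
  set q : ℕ → ℕ := Nat.nth Nat.Prime with hqdef
  have hq : ∀ j, (q j).Prime := fun j => Nat.nth_mem_of_infinite Nat.infinite_setOf_prime j
  have hq2 : ∀ j, 2 ≤ q j := fun j => (hq j).two_le
  have hqmono : StrictMono q := Nat.nth_strictMono Nat.infinite_setOf_prime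
  have hqj : ∀ j, j ≤ q j := fun j => hqmono.le_apply
  obtain ⟨j0, hj0⟩ : ∃ j0 : ℕ, 1/ε < (j0:ℝ) := exists_nat_gt (1/ε)
  set P : ℕ → ℝ := fun k => ∏ j ∈ Finset.Ico j0 k, rP (q j) with hPdef
  have hr_pos : ∀ j, 0 < rP (q j) := fun j => (rP_bounds (hq2 j)).1
  have hr_lt : ∀ j, rP (q j) < 1 := fun j => (rP_bounds (hq2 j)).2.1
  have hP_pos : ∀ k, 0 < P k := fun k => Finset.prod_pos (fun j _ => hr_pos j)
  -- partial sums tend to infinity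
  have hdiv : Tendsto (fun k => ∑ j ∈ Finset.range k, (1 - rP (q j))) atTop atTop :=
    (not_summable_iff_tendsto_nat_atTop_of_nonneg
      (fun j => by linarith [hr_lt j])).mp not_summable_rP
  -- bound P by exp
  have hP_le : ∀ k, P k ≤ Real.exp (-(∑ j ∈ Finset.Ico j0 k, (1 - rP (q j)))) := by
    intro k
    calc P k ≤ ∏ j ∈ Finset.Ico j0 k, Real.exp (-(1 - rP (q j))) := by
          refine Finset.prod_le_prod (fun j _ => (hr_pos j).le) (fun j _ => ?_)
          have := Real.add_one_le_exp (-(1 - rP (q j)))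
          linarith
      _ = Real.exp (∑ j ∈ Finset.Ico j0 k, -(1 - rP (q j))) := (Real.exp_sum _ _).symm
      _ = Real.exp (-(∑ j ∈ Finset.Ico j0 k, (1 - rP (q j)))) := by rw [Finset.sum_neg_distrib]
  have hex : ∃ k, P k < a := by
    have hC := (hdiv.eventually_ge_atTop
      (Real.log (1/a) + 1 + ∑ j ∈ Finset.range j0, (1 - rP (q j)))).and
      (eventually_ge_atTop j0)
    obtain ⟨k, hk1, hk2⟩ := hC.exists
    refine ⟨k, lt_of_le_of_lt (hP_le k) ?_⟩
    have hsplit : ∑ j ∈ Finset.Ico j0 k, (1 - rP (q j))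
        = ∑ j ∈ Finset.range k, (1 - rP (q j)) - ∑ j ∈ Finset.range j0, (1 - rP (q j)) :=
      Finset.sum_Ico_eq_sub _ hk2
    have hgt : Real.log (1/a) < ∑ j ∈ Finset.Ico j0 k, (1 - rP (q j)) := by
      rw [hsplit]; linarith
    have : -(∑ j ∈ Finset.Ico j0 k, (1 - rP (q j))) < Real.log a := by
      rw [Real.log_div one_ne_zero ha0.ne'] at hgt
      simp only [Real.log_one] at hgt
      linarith
    exact (Real.lt_log_iff_exp_lt ha0).mp this
  set k0 := Nat.find hex with hk0def
  have hk0 : P k0 < a := Nat.find_spec hex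
  have hmin : ∀ m, m < k0 → ¬ P m < a := fun m hm => Nat.find_min hex hm
  have hj0k : j0 < k0 := by
    by_contra hcon
    push_neg at hcon
    have : P k0 = 1 := by
      rw [hPdef]
      simp [Finset.Ico_eq_empty_of_le hcon]
    rw [this] at hk0
    linarith
  set m := k0 - 1 with hmdef
  have hm1 : j0 ≤ m := by omega
  have hm2 : m + 1 = k0 := by omega
  have hsplit : P k0 = P m * rP (q m) := by
    simp only [hPdef, ← hm2]
    exact Finset.prod_Ico_succ_top hm1 _
  have hPm : a ≤ P m := not_lt.mp (hmin m (by omega))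
  have hqm : 1/ε < ((q m : ℕ):ℝ) := by
    have h1 : (j0 : ℝ) ≤ (q m : ℝ) := by
      exact_mod_cast le_trans hm1 (hqj m)
    linarith
  have hqeps : 1/((q m : ℕ):ℝ) < ε := by
    have hq0 : (0:ℝ) < (q m : ℝ) := by
      have := hq2 m; exact_mod_cast Nat.lt_of_lt_of_le Nat.zero_lt_two this
    rw [div_lt_iff₀ hq0]
    rw [div_lt_iff₀ hε] at hqm
    linarith
  have hlow : a - ε < P k0 := by
    have h1 : 1 - 1/((q m:ℕ):ℝ) ≤ rP (q m) := (rP_bounds (hq2 m)).2.2.1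
    have h2 : a * rP (q m) ≤ P m * rP (q m) :=
      mul_le_mul_of_nonneg_right hPm (hr_pos m).le
    have h3 : a * (1 - 1/((q m:ℕ):ℝ)) ≤ a * rP (q m) :=
      mul_le_mul_of_nonneg_left h1 ha0.le
    have h4 : (0:ℝ) < (q m : ℝ) := by
      have := hq2 m; exact_mod_cast Nat.lt_of_lt_of_le Nat.zero_lt_two this
    have h5 : 0 ≤ 1/((q m:ℕ):ℝ) := by positivity
    nlinarith
  refine ⟨(Finset.Ico j0 k0).image q, ?_, ?_⟩
  · intro p hp
    obtain ⟨j, _, rfl⟩ := Finset.mem_image.mp hp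
    exact hq j
  · rw [Finset.prod_image (fun i _ j _ h => hqmono.injective h)]
    rw [abs_sub_lt_iff]
    constructor <;> [skip; skip]
    · have : P k0 - a < 0 := by linarith
      linarith
    · linarith


lemma ratio_eq {S : Finset ℕ} {G : Type} [CommGroup G] (H : Subgroup G)
    (hH : avgOrder ↥H = ∏ p ∈ S, (((p : ℝ) - 1) * p + 1) / p)
    (hG : avgOrder G = ∏ p ∈ S, (((p : ℝ) ^ 2 - 1) * p + 1) / p ^ 2) :
    avgOrder ↥H / avgOrder G = ∏ p ∈ S, rP p := by
  rw [hH, hG, ← Finset.prod_div_distrib]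
  rfl

/-- The set of ratios `o(H)/o(G)`, with `G` finite abelian and `H ≤ G`,
is dense in `[0, 1]`. -/
theorem avgOrder_inv_ratio_abelian_dense :
    ∀ a : ℝ, 0 ≤ a → a ≤ 1 → ∀ ε : ℝ, 0 < ε →
      ∃ (G : Type) (_ : CommGroup G), Finite G ∧
        ∃ H : Subgroup G, |avgOrder H / avgOrder G - a| < ε := by
  intro a ha0 ha1 ε hε
  rcases eq_or_lt_of_le ha0 with h0 | h0
  · -- a = 0
    set b := min (ε/2) 1 with hbdef
    have hb0 : 0 < b := lt_min (by linarith) one_pos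
    have hb1 : b ≤ 1 := min_le_right _ _
    obtain ⟨S, hS, hval⟩ := exists_finset_prod b b hb0 hb1 hb0
    obtain ⟨G, iG, fG, H, _, hH, hG⟩ := exists_group S hS
    refine ⟨G, iG, fG, H, ?_⟩
    rw [ratio_eq H hH hG, ← h0, sub_zero]
    have habs : |∏ p ∈ S, rP p| - |b| ≤ |∏ p ∈ S, rP p - b| :=
      abs_sub_abs_le_abs_sub _ _
    have hbb : |b| = b := abs_of_pos hb0
    have hb2 : b ≤ ε/2 := min_le_left _ _
    linarith
  · obtain ⟨S, hS, hval⟩ := exists_finset_prod a ε h0 ha1 hε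
    obtain ⟨G, iG, fG, H, _, hH, hG⟩ := exists_group S hS
    refine ⟨G, iG, fG, H, ?_⟩
    rw [ratio_eq H hH hG]
    exact hval
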